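/- Let m ∈ ℕ with m ≥ 2 and let t > 0. Then ∫₀^{π/m} ∫₀^∞ (1/(4πt)) ( Σ_{k=1}^{m−1} exp(−(r²/t) sin²(kπ/m)) ) r dr dθ = (1/(8m)) Σ_{k=1}^{m−1} 1/sin²(kπ/m) = (m²−1)/(24m). In particular the result is independent of t, and it is the contribution of the nontrivial rotation elements of the dihedral group Dih_{2m} to the constant (topological) term of the short-time partition function of the infinite plane wedge of opening angle π/m. -/

import Mathlib

open Real MeasureTheory

section WRCAux
open Finset

private lemma wrc_l1 (m : ℕ) (z : ℂ) :
    (z - 1) * ∑ j ∈ range m, (j : ℂ) * z ^ j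
      = ((m : ℂ) - 1) * z ^ m + 1 - ∑ j ∈ range m, z ^ j := by
  induction m with
  | zero => simp
  | succ n ih =>
    rw [sum_range_succ, sum_range_succ (f := fun j => z ^ j)]
    push_cast
    ring_nf
    ring_nf at ih
    linear_combination ih

private lemma wrc_l2 (m : ℕ) (z : ℂ) :
    (z - 1) * ∑ j ∈ range m, (j : ℂ) ^ 2 * z ^ j
      = ((m : ℂ) - 1) ^ 2 * z ^ m - 2 * ∑ j ∈ range m, (j : ℂ) * z ^ j
        + ∑ j ∈ range m, z ^ j - 1 := by
  induction m with
  | zero => simp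
  | succ n ih =>
    rw [sum_range_succ, sum_range_succ (f := fun j => (j : ℂ) * z ^ j),
      sum_range_succ (f := fun j => z ^ j)]
    push_cast
    ring_nf
    ring_nf at ih
    linear_combination ih

private lemma wrc_sum_id (n : ℕ) : ∑ j ∈ range n, (j : ℂ) = n * (n - 1) / 2 := by
  induction n with
  | zero => simp
  | succ k ih =>
    rw [sum_range_succ, ih]
    push_cast
    ring

private lemma wrc_sum_sq (n : ℕ) : ∑ j ∈ range n, (j : ℂ) ^ 2 = n * (n - 1) * (2 * n - 1) / 6 := by
  induction n with
  | zero => simp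
  | succ k ih =>
    rw [sum_range_succ, ih]
    push_cast
    ring

private lemma wrc_range_eq (m : ℕ) (hm : 1 ≤ m) :
    range m = insert 0 (Finset.Icc 1 (m - 1)) := by
  ext x
  simp only [mem_range, Finset.mem_insert, Finset.mem_Icc]
  omega

private lemma wrc_geom_zero {m : ℕ} {w : ℂ} (hw : w ^ m = 1) (hw1 : w ≠ 1) :
    ∑ j ∈ range m, w ^ j = 0 := by
  have h := geom_sum_mul w m
  rw [hw, sub_self] at h
  rcases mul_eq_zero.mp h with h | h
  · exact h
  · exact absurd (sub_eq_zero.mp h) hw1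

private lemma wrc_sum_eval {m : ℕ} (hm : 2 ≤ m) {ζ : ℂ} (hζ : IsPrimitiveRoot ζ m)
    (c : ℕ → ℂ) (hc0 : c 0 = 0) :
    ∑ k ∈ Finset.Icc 1 (m - 1), ∑ j ∈ range m, c j * (ζ ^ k) ^ j
      = -∑ j ∈ range m, c j := by
  rw [Finset.sum_comm]
  rw [← Finset.sum_neg_distrib]
  refine Finset.sum_congr rfl fun j hj => ?_
  rcases Nat.eq_zero_or_pos j with rfl | hj1
  · simp [hc0]
  · have hjm : j < m := mem_range.mp hj
    have hwm : (ζ ^ j) ^ m = 1 := by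
      rw [← pow_mul, mul_comm, pow_mul, hζ.pow_eq_one, one_pow]
    have hw1 : ζ ^ j ≠ 1 := hζ.pow_ne_one_of_pos_of_lt hj1.ne' hjm
    have hgeo : ∑ k ∈ range m, (ζ ^ j) ^ k = 0 := wrc_geom_zero hwm hw1
    have h0 : (0 : ℕ) ∉ Finset.Icc 1 (m - 1) := by simp
    rw [wrc_range_eq m (by omega), Finset.sum_insert h0] at hgeo
    have : ∑ k ∈ Finset.Icc 1 (m - 1), (ζ ^ j) ^ k = -1 := by
      simpa using by linear_combination hgeo
    calc ∑ k ∈ Finset.Icc 1 (m - 1), c j * (ζ ^ k) ^ j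
        = ∑ k ∈ Finset.Icc 1 (m - 1), c j * (ζ ^ j) ^ k := by
          refine Finset.sum_congr rfl fun k _ => ?_
          rw [← pow_mul, mul_comm k j, pow_mul]
      _ = c j * ∑ k ∈ Finset.Icc 1 (m - 1), (ζ ^ j) ^ k := by rw [Finset.mul_sum]
      _ = -c j := by rw [this]; ring

private lemma wrc_inv {m : ℕ} (hm : 2 ≤ m) {z : ℂ} (hzm : z ^ m = 1) (hz1 : z ≠ 1) :
    (z - 1)⁻¹ = (∑ j ∈ range m, (j : ℂ) * z ^ j) / m := by
  have hz1' : z - 1 ≠ 0 := sub_ne_zero.mpr hz1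
  have hm0 : (m : ℂ) ≠ 0 := Nat.cast_ne_zero.mpr (by omega)
  have h1 := wrc_l1 m z
  rw [hzm, wrc_geom_zero hzm hz1] at h1
  rw [inv_eq_one_div, div_eq_div_iff hz1' hm0]
  linear_combination -h1

private lemma wrc_inv_sq {m : ℕ} (hm : 2 ≤ m) {z : ℂ} (hzm : z ^ m = 1) (hz1 : z ≠ 1) :
    ((z - 1)⁻¹) ^ 2
      = ((((m : ℂ) - 1) ^ 2 - 1) * (z - 1)⁻¹ - ∑ j ∈ range m, (j : ℂ) ^ 2 * z ^ j) / (2 * m) := by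
  have hz1' : z - 1 ≠ 0 := sub_ne_zero.mpr hz1
  have hm0 : (m : ℂ) ≠ 0 := Nat.cast_ne_zero.mpr (by omega)
  have h2 := wrc_l2 m z
  rw [hzm, wrc_geom_zero hzm hz1] at h2
  have h1 := wrc_inv hm hzm hz1
  have hS2 : ∑ j ∈ range m, (j : ℂ) ^ 2 * z ^ j
      = (z - 1)⁻¹ * (((m : ℂ) - 1) ^ 2 - 2 * ∑ j ∈ range m, (j : ℂ) * z ^ j - 1) := by
    calc ∑ j ∈ range m, (j : ℂ) ^ 2 * z ^ j
        = (z - 1)⁻¹ * ((z - 1) * ∑ j ∈ range m, (j : ℂ) ^ 2 * z ^ j) :=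
          (inv_mul_cancel_left₀ hz1' _).symm
      _ = _ := by rw [h2]; ring
  rw [hS2, h1]
  field_simp
  ring

private lemma wrc_sin_pos {m : ℕ} (hm : 2 ≤ m) {k : ℕ} (hk1 : 1 ≤ k) (hkm : k ≤ m - 1) :
    0 < Real.sin ((k : ℝ) * Real.pi / m) := by
  have hm0 : (0:ℝ) < m := by positivity
  apply Real.sin_pos_of_pos_of_lt_pi
  · have : (0:ℝ) < (k:ℝ) := by exact_mod_cast Nat.pos_of_ne_zero (by omega)
    positivity
  · rw [div_lt_iff₀ hm0]
    have : (k:ℝ) < m := by exact_mod_cast (by omega : k < m)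
    nlinarith [Real.pi_pos]

private lemma wrc_csc_sq {m : ℕ} (hm : 2 ≤ m) {k : ℕ} (hk1 : 1 ≤ k) (hkm : k ≤ m - 1) :
    ((1 / Real.sin ((k : ℝ) * Real.pi / m) ^ 2 : ℝ) : ℂ)
      = -4 * (Complex.exp (2 * Real.pi * Complex.I / m) ^ k - 1)⁻¹
        - 4 * ((Complex.exp (2 * Real.pi * Complex.I / m) ^ k - 1)⁻¹) ^ 2 := by
  have hm0 : (m : ℂ) ≠ 0 := Nat.cast_ne_zero.mpr (by omega)
  set x : ℝ := (k : ℝ) * Real.pi / m with hx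
  set ζ : ℂ := Complex.exp (2 * Real.pi * Complex.I / m) with hζdef
  have hζ : IsPrimitiveRoot ζ m := Complex.isPrimitiveRoot_exp m (by omega)
  have hz1 : ζ ^ k - 1 ≠ 0 :=
    sub_ne_zero.mpr (hζ.pow_ne_one_of_pos_of_lt (by omega) (by omega))
  have hs : Real.sin x ≠ 0 := (wrc_sin_pos hm hk1 hkm).ne'
  have hzx : ζ ^ k = Complex.exp (((2 * x : ℝ) : ℂ) * Complex.I) := by
    rw [hζdef, ← Complex.exp_nat_mul]
    congr 1
    push_cast [hx]
    field_simp
  have hz : ζ ^ k = Complex.cos ((2 * x : ℝ) : ℂ) + Complex.sin ((2 * x : ℝ) : ℂ) * Complex.I := by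
    rw [hzx, Complex.exp_mul_I]
  have hsq : (ζ ^ k - 1) ^ 2 = ζ ^ k * (2 * Complex.cos ((2 * x : ℝ) : ℂ) - 2) := by
    rw [hz]
    linear_combination (Complex.sin ((2 * x : ℝ) : ℂ)) ^ 2 * Complex.I_sq
      - Complex.sin_sq_add_cos_sq ((2 * x : ℝ) : ℂ)
  have hcos : 2 * Complex.cos ((2 * x : ℝ) : ℂ) - 2 = -4 * ((Real.sin x : ℂ)) ^ 2 := by
    have h := Real.cos_two_mul' x
    have : Complex.cos ((2 * x : ℝ) : ℂ) = ((Real.cos (2 * x) : ℝ) : ℂ) := by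
      rw [Complex.ofReal_cos]
    rw [this, h]
    push_cast
    linear_combination 2 * Complex.sin_sq_add_cos_sq ((x : ℝ) : ℂ)
  have h4 : (ζ ^ k - 1) ^ 2 = ((Real.sin x : ℂ)) ^ 2 * (-4 * ζ ^ k) := by
    rw [hsq, hcos]; ring
  have hsC : Complex.sin ((x : ℝ) : ℂ) ≠ 0 := by
    rw [← Complex.ofReal_sin]; exact Complex.ofReal_ne_zero.mpr hs
  push_cast at h4 ⊢
  field_simp
  linear_combination h4

private lemma wrc_sum_csc_sq {m : ℕ} (hm : 2 ≤ m) :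
    ∑ k ∈ Finset.Icc 1 (m - 1), 1 / Real.sin ((k : ℝ) * Real.pi / m) ^ 2
      = ((m : ℝ) ^ 2 - 1) / 3 := by
  have hm0 : (m : ℂ) ≠ 0 := Nat.cast_ne_zero.mpr (by omega)
  set ζ : ℂ := Complex.exp (2 * Real.pi * Complex.I / m) with hζdef
  have hζ : IsPrimitiveRoot ζ m := Complex.isPrimitiveRoot_exp m (by omega)
  have hpow : ∀ k ∈ Finset.Icc 1 (m - 1), (ζ ^ k) ^ m = 1 := fun k _ => by
    rw [← pow_mul, mul_comm, pow_mul, hζ.pow_eq_one, one_pow]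
  have hne : ∀ k ∈ Finset.Icc 1 (m - 1), ζ ^ k ≠ 1 := fun k hk => by
    have hk' := Finset.mem_Icc.mp hk
    exact hζ.pow_ne_one_of_pos_of_lt (by omega) (by omega)
  have hA : ∑ k ∈ Finset.Icc 1 (m - 1), (ζ ^ k - 1)⁻¹ = -(((m : ℂ) - 1) / 2) := by
    have h1 : ∑ k ∈ Finset.Icc 1 (m - 1), (ζ ^ k - 1)⁻¹
        = ∑ k ∈ Finset.Icc 1 (m - 1), (∑ j ∈ range m, (j : ℂ) * (ζ ^ k) ^ j) / m :=
      Finset.sum_congr rfl fun k hk => wrc_inv hm (hpow k hk) (hne k hk)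
    rw [h1, ← Finset.sum_div, wrc_sum_eval hm hζ _ (by norm_num), wrc_sum_id]
    field_simp
  have hS2 : ∑ k ∈ Finset.Icc 1 (m - 1), ∑ j ∈ range m, (j : ℂ) ^ 2 * (ζ ^ k) ^ j
      = -((m : ℂ) * (m - 1) * (2 * m - 1) / 6) := by
    rw [wrc_sum_eval hm hζ _ (by norm_num), wrc_sum_sq]
  have hB : ∑ k ∈ Finset.Icc 1 (m - 1), ((ζ ^ k - 1)⁻¹) ^ 2
      = ((((m : ℂ) - 1) ^ 2 - 1) * (-(((m : ℂ) - 1) / 2))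
          + (m : ℂ) * (m - 1) * (2 * m - 1) / 6) / (2 * m) := by
    have h1 : ∑ k ∈ Finset.Icc 1 (m - 1), ((ζ ^ k - 1)⁻¹) ^ 2
        = ∑ k ∈ Finset.Icc 1 (m - 1),
            ((((m : ℂ) - 1) ^ 2 - 1) * (ζ ^ k - 1)⁻¹
              - ∑ j ∈ range m, (j : ℂ) ^ 2 * (ζ ^ k) ^ j) / (2 * m) :=
      Finset.sum_congr rfl fun k hk => wrc_inv_sq hm (hpow k hk) (hne k hk)
    rw [h1, ← Finset.sum_div, Finset.sum_sub_distrib, ← Finset.mul_sum, hA, hS2]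
    ring
  have key : ((∑ k ∈ Finset.Icc 1 (m - 1), 1 / Real.sin ((k : ℝ) * Real.pi / m) ^ 2 : ℝ) : ℂ)
      = ((m : ℂ) ^ 2 - 1) / 3 := by
    rw [Complex.ofReal_sum]
    have h1 : ∑ k ∈ Finset.Icc 1 (m - 1), ((1 / Real.sin ((k : ℝ) * Real.pi / m) ^ 2 : ℝ) : ℂ)
        = ∑ k ∈ Finset.Icc 1 (m - 1), (-4 * (ζ ^ k - 1)⁻¹ - 4 * ((ζ ^ k - 1)⁻¹) ^ 2) := by
      refine Finset.sum_congr rfl fun k hk => ?_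
      have hk' := Finset.mem_Icc.mp hk
      exact wrc_csc_sq hm hk'.1 hk'.2
    rw [h1, Finset.sum_sub_distrib, ← Finset.mul_sum, ← Finset.mul_sum, hA, hB]
    field_simp
    ring
  rw [show (((m : ℂ) ^ 2 - 1) / 3) = ((((m : ℝ) ^ 2 - 1) / 3 : ℝ) : ℂ) by push_cast; ring] at key
  exact_mod_cast key

private lemma wrc_integral_exp {a : ℝ} (ha : 0 < a) :
    ∫ r in Set.Ioi (0 : ℝ), Real.exp (-a * r ^ 2) * r = (2 * a)⁻¹ := by
  have hb : (0 : ℝ) < ((a : ℂ)).re := by simpa using ha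
  have h := integral_mul_cexp_neg_mul_sq hb
  have h2 : ((∫ r in Set.Ioi (0 : ℝ), Real.exp (-a * r ^ 2) * r : ℝ) : ℂ)
      = (2 * (a : ℂ))⁻¹ := by
    calc ((∫ r in Set.Ioi (0 : ℝ), Real.exp (-a * r ^ 2) * r : ℝ) : ℂ)
        = ∫ r in Set.Ioi (0 : ℝ), ((Real.exp (-a * r ^ 2) * r : ℝ) : ℂ) :=
          integral_ofReal.symm
      _ = ∫ r in Set.Ioi (0 : ℝ), (r : ℂ) * Complex.exp (-(a : ℂ) * (r : ℂ) ^ 2) := by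
          refine setIntegral_congr_fun measurableSet_Ioi fun r _ => ?_
          push_cast [Complex.ofReal_exp]
          ring_nf
      _ = (2 * (a : ℂ))⁻¹ := h
  have h3 : (2 * (a : ℂ))⁻¹ = (((2 * a)⁻¹ : ℝ) : ℂ) := by push_cast; ring
  rw [h3] at h2
  exact_mod_cast h2

private lemma wrc_inner {m : ℕ} (hm : 2 ≤ m) {t : ℝ} (ht : 0 < t) :
    (∫ r in Set.Ioi (0 : ℝ),
        (1 / (4 * Real.pi * t)) *
          (∑ k ∈ Finset.Icc 1 (m - 1),
            Real.exp (-(r ^ 2 / t) * Real.sin ((k : ℝ) * Real.pi / m) ^ 2)) * r)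
      = (1 / (8 * Real.pi)) *
          ∑ k ∈ Finset.Icc 1 (m - 1), 1 / Real.sin ((k : ℝ) * Real.pi / m) ^ 2 := by
  have hπ := Real.pi_pos
  have ha : ∀ k ∈ Finset.Icc 1 (m - 1), 0 < Real.sin ((k : ℝ) * Real.pi / m) ^ 2 := by
    intro k hk
    have hk' := Finset.mem_Icc.mp hk
    exact pow_pos (wrc_sin_pos hm hk'.1 hk'.2) 2
  have hfun : ∀ r : ℝ,
      (1 / (4 * Real.pi * t)) *
          (∑ k ∈ Finset.Icc 1 (m - 1),
            Real.exp (-(r ^ 2 / t) * Real.sin ((k : ℝ) * Real.pi / m) ^ 2)) * r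
        = ∑ k ∈ Finset.Icc 1 (m - 1),
            (1 / (4 * Real.pi * t)) *
              (Real.exp (-(Real.sin ((k : ℝ) * Real.pi / m) ^ 2 / t) * r ^ 2) * r) := by
    intro r
    rw [Finset.mul_sum, Finset.sum_mul]
    refine Finset.sum_congr rfl fun k _ => ?_
    rw [show -(r ^ 2 / t) * Real.sin ((k : ℝ) * Real.pi / m) ^ 2
        = -(Real.sin ((k : ℝ) * Real.pi / m) ^ 2 / t) * r ^ 2 by ring]
    ring
  simp_rw [hfun]
  rw [MeasureTheory.integral_finset_sum]
  · have hstep : ∀ k ∈ Finset.Icc 1 (m - 1),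
        (∫ r in Set.Ioi (0 : ℝ),
          (1 / (4 * Real.pi * t)) *
            (Real.exp (-(Real.sin ((k : ℝ) * Real.pi / m) ^ 2 / t) * r ^ 2) * r))
          = (1 / (8 * Real.pi)) * (1 / Real.sin ((k : ℝ) * Real.pi / m) ^ 2) := by
      intro k hk
      have hb : 0 < Real.sin ((k : ℝ) * Real.pi / m) ^ 2 / t := div_pos (ha k hk) ht
      rw [integral_const_mul, wrc_integral_exp hb]
      have h0 : Real.sin ((k : ℝ) * Real.pi / m) ^ 2 ≠ 0 := (ha k hk).ne'
      field_simp
      ring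
    rw [Finset.sum_congr rfl hstep, ← Finset.mul_sum]
  · intro k hk
    have hb : 0 < Real.sin ((k : ℝ) * Real.pi / m) ^ 2 / t := div_pos (ha k hk) ht
    have h1 : (fun r : ℝ =>
        Real.exp (-(Real.sin ((k : ℝ) * Real.pi / m) ^ 2 / t) * r ^ 2) * r)
        = fun r : ℝ => r * Real.exp (-(Real.sin ((k : ℝ) * Real.pi / m) ^ 2 / t) * r ^ 2) := by
      funext r; ring
    have h2 := (integrable_mul_exp_neg_mul_sq hb).integrableOn (s := Set.Ioi (0:ℝ))
    rw [← h1] at h2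
    exact h2.const_mul _

end WRCAux

/-- The contribution of the nontrivial rotations of `Dih_{2m}` to the constant term of the
short-time partition function of the infinite plane wedge of opening angle `π/m`:
`∫₀^{π/m} ∫₀^∞ (1/(4πt)) Σ_{k=1}^{m−1} exp(−(r²/t) sin²(kπ/m)) r dr dθ
  = (1/(8m)) Σ_{k=1}^{m−1} 1/sin²(kπ/m) = (m²−1)/(24m)`, independently of `t`. -/
theorem wedge_rotation_contribution (m : ℕ) (hm : 2 ≤ m) (t : ℝ) (ht : 0 < t) :
    (∫ θ in (0:ℝ)..(Real.pi / m),
        ∫ r in Set.Ioi (0:ℝ),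
          (1 / (4 * Real.pi * t)) *
            (∑ k ∈ Finset.Icc 1 (m - 1),
              Real.exp (-(r ^ 2 / t) * Real.sin ((k : ℝ) * Real.pi / m) ^ 2)) * r) =
      (1 / (8 * (m : ℝ))) *
        ∑ k ∈ Finset.Icc 1 (m - 1), 1 / Real.sin ((k : ℝ) * Real.pi / m) ^ 2 ∧
    (1 / (8 * (m : ℝ))) *
        (∑ k ∈ Finset.Icc 1 (m - 1), 1 / Real.sin ((k : ℝ) * Real.pi / m) ^ 2) =
      ((m : ℝ) ^ 2 - 1) / (24 * m) := by
  have hπ : Real.pi ≠ 0 := Real.pi_ne_zero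
  have hm0 : (m : ℝ) ≠ 0 := Nat.cast_ne_zero.mpr (by omega)
  constructor
  · rw [intervalIntegral.integral_const, wrc_inner hm ht, smul_eq_mul, sub_zero]
    field_simp
  · rw [wrc_sum_csc_sq hm]
    field_simp
    ring_nf
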